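/- Charge-conjugation symmetry of the reduced system: if (χ, a, f, Q) is a solution of system (10) on (0,∞) with sign ε, then the functions χ̃ = π − χ, ã = −(a + 2), f̃ = f, Q̃ = Q form a solution of system (10) on (0,∞) with sign −ε. -/

import Mathlib

open Real Filter Topology Set

/-- Charge-conjugation symmetry of the reduced static spherically
symmetric Dirac–Maxwell system (10): if `(χ, a, f, Q)` solves (10) on `(0,∞)` with
sign `ε`, then `(π - χ, -(a+2), f, Q)` solves (10) on `(0,∞)` with sign `-ε`. -/
theorem charge_conjugation_symmetry
    (χ a f Q : ℝ → ℝ) (ε : ℝ) (hε : ε = 1 ∨ ε = -1)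
    (hχ : ∀ ρ > (0:ℝ), HasDerivAt χ (a ρ + 1 - Real.cos (χ ρ)) ρ)
    (ha : ∀ ρ > (0:ℝ), HasDerivAt a (-ε * f ρ / ρ ^ 2) ρ)
    (hf : ∀ ρ > (0:ℝ), HasDerivAt f (Q ρ) ρ)
    (hQ : ∀ ρ > (0:ℝ), HasDerivAt Q (-Q ρ * Real.sin (χ ρ)) ρ)
    (hQnn : ∀ ρ > (0:ℝ), 0 ≤ Q ρ) :
    (∀ ρ > (0:ℝ), HasDerivAt (fun σ => Real.pi - χ σ)
      ((-(a ρ + 2)) + 1 - Real.cos (Real.pi - χ ρ)) ρ) ∧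
    (∀ ρ > (0:ℝ), HasDerivAt (fun σ => -(a σ + 2)) (-(-ε) * f ρ / ρ ^ 2) ρ) ∧
    (∀ ρ > (0:ℝ), HasDerivAt f (Q ρ) ρ) ∧
    (∀ ρ > (0:ℝ), HasDerivAt Q (-Q ρ * Real.sin (Real.pi - χ ρ)) ρ) ∧
    (∀ ρ > (0:ℝ), 0 ≤ Q ρ) := by
  refine ⟨?_, ?_, hf, ?_, hQnn⟩
  · intro ρ hρ
    have h := (hχ ρ hρ).const_sub Real.pi
    refine h.congr_deriv ?_
    rw [Real.cos_pi_sub]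
    ring
  · intro ρ hρ
    have h := ((ha ρ hρ).add_const 2).neg
    refine h.congr_deriv ?_
    ring
  · intro ρ hρ
    rw [Real.sin_pi_sub]
    exact hQ ρ hρ
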